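/- Let H be a complex Hilbert space and let a, b, e ∈ H with ‖e‖ = 1. Then |⟨a,e⟩⟨e,b⟩| ≤ (|⟨a,b⟩| + ‖a‖‖b‖)/2. -/

import Mathlib

open scoped InnerProductSpace

theorem stmt_0 {H : Type*} [NormedAddCommGroup H] [InnerProductSpace ℂ H] [CompleteSpace H]
    (a b e : H) (he : ‖e‖ = 1) :
    ‖⟪a, e⟫_ℂ * ⟪e, b⟫_ℂ‖ ≤ (‖⟪a, b⟫_ℂ‖ + ‖a‖ * ‖b‖) / 2 := by
  set c := ⟪e, b⟫_ℂ with hc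
  have hkey : ⟪a, e⟫_ℂ * c = (⟪a, b⟫_ℂ + ⟪a, (2 * c) • e - b⟫_ℂ) / 2 := by
    rw [inner_sub_right, inner_smul_right]; ring
  have hnorm : ‖(2 * c) • e - b‖ = ‖b‖ := by
    have h1 : ‖(2 * c) • e - b‖ ^ 2 = ‖b‖ ^ 2 := by
      rw [@norm_sub_sq ℂ, norm_smul, inner_smul_left, hc, map_mul (starRingEnd ℂ),
        mul_assoc, RCLike.conj_mul]
      simp [he, ← Complex.ofReal_pow]
      ring
    calc ‖(2 * c) • e - b‖ = Real.sqrt (‖(2 * c) • e - b‖ ^ 2) :=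
          (Real.sqrt_sq (norm_nonneg _)).symm
      _ = Real.sqrt (‖b‖ ^ 2) := by rw [h1]
      _ = ‖b‖ := Real.sqrt_sq (norm_nonneg _)
  calc ‖⟪a, e⟫_ℂ * c‖ = ‖⟪a, b⟫_ℂ + ⟪a, (2 * c) • e - b⟫_ℂ‖ / 2 := by
        rw [hkey]; simp
    _ ≤ (‖⟪a, b⟫_ℂ‖ + ‖⟪a, (2 * c) • e - b⟫_ℂ‖) / 2 := by
        gcongr; exact norm_add_le _ _
    _ ≤ (‖⟪a, b⟫_ℂ‖ + ‖a‖ * ‖b‖) / 2 := by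
        gcongr
        calc ‖⟪a, (2 * c) • e - b⟫_ℂ‖ ≤ ‖a‖ * ‖(2 * c) • e - b‖ := norm_inner_le_norm _ _
          _ = ‖a‖ * ‖b‖ := by rw [hnorm]
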